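/- Let (Ω, 𝓕, μ) be a probability space, E a measurable space, T_rct, T_synth : Ω → Bool measurable, and W : Ω → E measurable. Suppose T_rct is independent of the pair ω ↦ (T_synth ω, W ω) under μ and μ({ω | T_rct ω = true}) = 1/2. Then, letting A = {ω | T_rct ω = T_synth ω} (which has μ(A) = 1/2 > 0), the pushforward law of W under the conditional measure μ[·|A] equals the pushforward law of W under μ: Measure.map W (ProbabilityTheory.cond μ A) = Measure.map W μ. -/

import Mathlib

open MeasureTheory ProbabilityTheory

theorem map_cond_acceptance_eq_map {Ω E : Type*} [MeasurableSpace Ω] [MeasurableSpace E]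
    (μ : Measure Ω) [IsProbabilityMeasure μ]
    (Trct Tsynth : Ω → Bool) (W : Ω → E)
    (hTrct : Measurable Trct) (hTsynth : Measurable Tsynth) (hW : Measurable W)
    (hindep : IndepFun Trct (fun ω => (Tsynth ω, W ω)) μ)
    (hbal : μ {ω | Trct ω = true} = 1/2) :
    Measure.map W (ProbabilityTheory.cond μ {ω | Trct ω = Tsynth ω})
      = Measure.map W μ := by
  set A : Set Ω := {ω | Trct ω = Tsynth ω} with hA
  have hpair : Measurable (fun ω => (Tsynth ω, W ω)) := hTsynth.prodMk hW
  have hmt : MeasurableSet {ω | Trct ω = true} := hTrct (measurableSet_singleton true)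
  have hfalse : μ {ω | Trct ω = false} = 1/2 := by
    have hc : {ω | Trct ω = false} = {ω | Trct ω = true}ᶜ := by
      ext ω; cases h : Trct ω <;> simp [h]
    rw [hc, measure_compl hmt (measure_ne_top μ _), hbal, measure_univ]
    norm_num
  have key : ∀ s : Set E, MeasurableSet s →
      μ (A ∩ W ⁻¹' s) = 1/2 * μ (W ⁻¹' s) := by
    intro s hs
    have hsplit : A ∩ W ⁻¹' s =
        (Trct ⁻¹' {true} ∩ (fun ω => (Tsynth ω, W ω)) ⁻¹' ({true} ×ˢ s)) ∪
        (Trct ⁻¹' {false} ∩ (fun ω => (Tsynth ω, W ω)) ⁻¹' ({false} ×ˢ s)) := by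
      ext ω
      cases h1 : Trct ω <;> cases h2 : Tsynth ω <;>
        simp [hA, h1, h2, Set.mem_prod]
    have hdisj : Disjoint
        (Trct ⁻¹' {true} ∩ (fun ω => (Tsynth ω, W ω)) ⁻¹' ({true} ×ˢ s))
        (Trct ⁻¹' {false} ∩ (fun ω => (Tsynth ω, W ω)) ⁻¹' ({false} ×ˢ s)) := by
      apply Set.disjoint_left.2
      rintro ω ⟨h1, -⟩ ⟨h2, -⟩
      simp only [Set.mem_preimage, Set.mem_singleton_iff] at h1 h2
      rw [h1] at h2; exact Bool.noConfusion h2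
    have hm1 : MeasurableSet ((fun ω => (Tsynth ω, W ω)) ⁻¹' ({false} ×ˢ s)) :=
      hpair ((measurableSet_singleton false).prod hs)
    have hm0 : MeasurableSet ((fun ω => (Tsynth ω, W ω)) ⁻¹' ({true} ×ˢ s)) :=
      hpair ((measurableSet_singleton true).prod hs)
    rw [hsplit, measure_union hdisj ((hTrct (measurableSet_singleton false)).inter hm1),
      hindep.measure_inter_preimage_eq_mul _ _ (measurableSet_singleton true)
        ((measurableSet_singleton true).prod hs),
      hindep.measure_inter_preimage_eq_mul _ _ (measurableSet_singleton false)
        ((measurableSet_singleton false).prod hs)]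
    have e1 : Trct ⁻¹' {true} = {ω | Trct ω = true} := rfl
    have e2 : Trct ⁻¹' {false} = {ω | Trct ω = false} := rfl
    rw [e1, e2, hbal, hfalse, ← mul_add]
    congr 1
    have p1 : (fun ω => (Tsynth ω, W ω)) ⁻¹' ({true} ×ˢ s)
        = Tsynth ⁻¹' {true} ∩ W ⁻¹' s := by ext ω; simp [Set.mem_prod]
    have p2 : (fun ω => (Tsynth ω, W ω)) ⁻¹' ({false} ×ˢ s)
        = Tsynth ⁻¹' {false} ∩ W ⁻¹' s := by ext ω; simp [Set.mem_prod]
    rw [p1, p2, ← measure_union _ ((hTsynth (measurableSet_singleton false)).inter (hW hs))]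
    · congr 1
      ext ω
      cases h2 : Tsynth ω <;> simp [h2]
    · apply Set.disjoint_left.2
      rintro ω ⟨h1, -⟩ ⟨h2, -⟩
      simp only [Set.mem_preimage, Set.mem_singleton_iff] at h1 h2
      rw [h1] at h2; exact Bool.noConfusion h2
  have hAmeas : MeasurableSet A := by
    have : A = (Trct ⁻¹' {true} ∩ Tsynth ⁻¹' {true}) ∪
        (Trct ⁻¹' {false} ∩ Tsynth ⁻¹' {false}) := by
      ext ω; cases h1 : Trct ω <;> cases h2 : Tsynth ω <;> simp [hA, h1, h2]
    rw [this]
    exact ((hTrct (measurableSet_singleton true)).inter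
        (hTsynth (measurableSet_singleton true))).union
      ((hTrct (measurableSet_singleton false)).inter
        (hTsynth (measurableSet_singleton false)))
  have hAmeasure : μ A = 1/2 := by
    have := key Set.univ MeasurableSet.univ
    simpa using this
  ext s hs
  rw [Measure.map_apply hW hs, Measure.map_apply hW hs, cond_apply hAmeas,
    hAmeasure, key s hs]
  rw [← mul_assoc, ENNReal.inv_mul_cancel (by norm_num) (by norm_num), one_mul]
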